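/- arXiv:1601.07307 — 3 statements merged into one kernel-verified Lean document; each statement's English description precedes it below -/
import Mathlib

section
/- For every t ≥ 2, the graph H_{t,2} is ≥(4t+1)-homogeneous: every isomorphism between finite induced subgraphs of size at least 4t+1 extends to an automorphism of H_{t,2}. -/
open SimpleGraph

/-- `M` is `n`-homogeneous: every isomorphism between induced subgraphs on
finite vertex sets of size `n` extends to an automorphism of `M`. -/
def IsNHom {V : Type*} (M : SimpleGraph V) (n : ℕ) : Prop :=
  ∀ (s t : Set V), s.Finite → t.Finite → s.ncard = n → t.ncard = n →
    ∀ f : M.induce s ≃g M.induce t, ∃ g : M ≃g M, ∀ x : s, g x.val = (f x).val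

/-- `M` is `≥k`-homogeneous: `n`-homogeneous for all `n ≥ k`. -/
def GeqHom {V : Type*} (M : SimpleGraph V) (k : ℕ) : Prop :=
  ∀ n, k ≤ n → IsNHom M n

/-- `M` is homogeneous: `n`-homogeneous for all `n`. -/
def IsHomogeneous {V : Type*} (M : SimpleGraph V) : Prop :=
  ∀ n, IsNHom M n

/-- The countably infinite complete graph embeds into `M` as an induced subgraph. -/
def HasKInf {V : Type*} (M : SimpleGraph V) : Prop :=
  Nonempty ((⊤ : SimpleGraph ℕ) ↪g M)

/-- `a` and `b` lie in the same orbit of vertices under `Aut(M)`. -/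
def SameOrbit {V : Type*} (M : SimpleGraph V) (a b : V) : Prop :=
  ∃ g : M ≃g M, g a = b

/-- `s` is an orbit of vertices under `Aut(M)`. -/
def IsOrbit {V : Type*} (M : SimpleGraph V) (s : Set V) : Prop :=
  ∃ a, s = {b | SameOrbit M a b}

/-- The ordered pairs `(a,b)` and `(c,d)` lie in the same orbit under `Aut(M)`. -/
def SamePairOrbit {V : Type*} (M : SimpleGraph V) (a b c d : V) : Prop :=
  ∃ g : M ≃g M, g a = c ∧ g b = d

/-- `a` and `b` lie in a common induced copy of `K_∞`. -/
def InCommonKInf {V : Type*} (M : SimpleGraph V) (a b : V) : Prop :=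
  ∃ f : (⊤ : SimpleGraph ℕ) ↪g M, a ∈ Set.range f ∧ b ∈ Set.range f

/-- The 2-orbit `q₁`: adjacent pairs lying in a common induced `K_∞`. -/
def Q1Rel {V : Type*} (M : SimpleGraph V) (a b : V) : Prop :=
  M.Adj a b ∧ InCommonKInf M a b

/-- The 2-orbit `q₂`: adjacent pairs not lying in a common induced `K_∞`. -/
def Q2Rel {V : Type*} (M : SimpleGraph V) (a b : V) : Prop :=
  M.Adj a b ∧ ¬ InCommonKInf M a b

/-- The 2-orbit `p₁`: non-adjacent pairs `(a,b)` such that `b` is adjacent to at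
most `k-1` vertices of any induced `K_∞` containing `a`. -/
def P1Rel {V : Type*} (M : SimpleGraph V) (k : ℕ) (a b : V) : Prop :=
  a ≠ b ∧ ¬ M.Adj a b ∧
    ∀ f : (⊤ : SimpleGraph ℕ) ↪g M, a ∈ Set.range f →
      {c | c ∈ Set.range f ∧ M.Adj b c}.Finite ∧
      {c | c ∈ Set.range f ∧ M.Adj b c}.ncard ≤ k - 1

/-- The 2-orbit `p₂`: the remaining non-adjacent pairs of distinct vertices. -/
def P2Rel {V : Type*} (M : SimpleGraph V) (k : ℕ) (a b : V) : Prop :=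
  a ≠ b ∧ ¬ M.Adj a b ∧ ¬ P1Rel M k a b

/-- The graph `G_t` on `ℤ × {1,…,t}`, with `(a,i)` adjacent to `(b,j)` iff `a ≠ b`. -/
def Gt (t : ℕ) : SimpleGraph (ℤ × Fin t) where
  Adj x y := x.1 ≠ y.1
  symm := ⟨fun _ _ h => Ne.symm h⟩
  loopless := ⟨fun _ h => h rfl⟩

/-- The graph `H_{t,2}`: two copies of `G_t`, with `(a,i)` in the first copy
adjacent to `(b,j)` in the second copy iff `a = b`. -/
def Ht2 (t : ℕ) : SimpleGraph ((ℤ × Fin t) ⊕ (ℤ × Fin t)) where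
  Adj x y := match x, y with
    | .inl a, .inl b => a.1 ≠ b.1
    | .inr a, .inr b => a.1 ≠ b.1
    | .inl a, .inr b => a.1 = b.1
    | .inr a, .inl b => a.1 = b.1
  symm := by
    constructor
    rintro (a | a) (b | b) h <;> simp_all <;> omega
  loopless := by
    constructor
    rintro (a | a) h <;> exact h rfl

/-- The graph `H_{1,2}`: two disjoint copies of `K_∞` joined by a perfect matching. -/
def H12 : SimpleGraph (ℤ × Fin 2) where
  Adj x y := (x.2 = y.2 ∧ x.1 ≠ y.1) ∨ (x.1 = y.1 ∧ x.2 ≠ y.2)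
  symm := by
    constructor
    rintro x y (⟨h1, h2⟩ | ⟨h1, h2⟩)
    · exact Or.inl ⟨h1.symm, h2.symm⟩
    · exact Or.inr ⟨h1.symm, h2.symm⟩
  loopless := by
    constructor
    rintro x (⟨_, h⟩ | ⟨_, h⟩) <;> exact h rfl

namespace Stmt16Aux

variable {t : ℕ}

abbrev VV (t : ℕ) := (ℤ × Fin t) ⊕ (ℤ × Fin t)

def sideV : VV t → Bool := Sum.elim (fun _ => false) (fun _ => true)
def colV : VV t → ℤ := Sum.elim Prod.fst Prod.fst
def idxV : VV t → Fin t := Sum.elim Prod.snd Prod.snd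
def mkV (b : Bool) (a : ℤ) (i : Fin t) : VV t :=
  match b with
  | false => .inl (a, i)
  | true => .inr (a, i)

@[simp] lemma side_mk (b : Bool) (a : ℤ) (i : Fin t) : sideV (mkV b a i) = b := by cases b <;> rfl
@[simp] lemma col_mk (b : Bool) (a : ℤ) (i : Fin t) : colV (mkV b a i) = a := by cases b <;> rfl
@[simp] lemma idx_mk (b : Bool) (a : ℤ) (i : Fin t) : idxV (mkV b a i) = i := by cases b <;> rfl
@[simp] lemma mk_eta (v : VV t) : mkV (sideV v) (colV v) (idxV v) = v := by cases v <;> rfl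

lemma adj_iff (x y : VV t) :
    (Ht2 t).Adj x y ↔ ((sideV x = sideV y) ↔ colV x ≠ colV y) := by
  cases x <;> cases y <;> simp [Ht2, sideV, colV]

lemma exists_third {s : Set (VV t)} (hcard : 4 * t + 1 ≤ s.ncard)
    (c1 c2 : ℤ) : ∃ z ∈ s, colV z ≠ c1 ∧ colV z ≠ c2 := by
  by_contra h
  push_neg at h
  have hsub : s ⊆ Set.range (fun p : Bool × Bool × Fin t =>
      mkV p.1 (if p.2.1 then c1 else c2) p.2.2) := by
    intro v hv
    by_cases h1 : colV v = c1
    · exact ⟨(sideV v, true, idxV v), by simp [← h1]⟩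
    · exact ⟨(sideV v, false, idxV v), by simp [← h v hv h1]⟩
  have h1 : s.ncard ≤ (Set.range (fun p : Bool × Bool × Fin t =>
      mkV p.1 (if p.2.1 then c1 else c2) p.2.2)).ncard :=
    Set.ncard_le_ncard hsub (Set.finite_range _)
  have h2 : (Set.range (fun p : Bool × Bool × Fin t =>
      mkV p.1 (if p.2.1 then c1 else c2) p.2.2)).ncard ≤ 4 * t := by
    calc _ ≤ Nat.card (Bool × Bool × Fin t) := by
            rw [← Set.ncard_univ, ← Set.image_univ]
            exact Set.ncard_image_le Set.finite_univ
      _ = 4 * t := by simp [Nat.card_eq_fintype_card]; ring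
  omega

lemma lemA1 {x y : VV t} (h : colV x = colV y) (z : VV t) :
    ((Ht2 t).Adj x y ↔ ¬ ((Ht2 t).Adj z x ↔ (Ht2 t).Adj z y)) := by
  simp only [adj_iff, h]
  by_cases hz : colV z = colV y <;>
    cases hb : sideV x <;> cases hb2 : sideV y <;> cases hb3 : sideV z <;> simp [hz]

lemma lemA2 {x y z : VV t} (h : colV x ≠ colV y) (h1 : colV z ≠ colV x) (h2 : colV z ≠ colV y) :
    ((Ht2 t).Adj x y ↔ ((Ht2 t).Adj z x ↔ (Ht2 t).Adj z y)) := by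
  simp only [adj_iff]
  cases hb : sideV x <;> cases hb2 : sideV y <;> cases hb3 : sideV z <;> simp [h, h1, h2]

lemma char_col {s : Set (VV t)} (hcard : 4 * t + 1 ≤ s.ncard) {x y : VV t} :
    colV x = colV y ↔
      ∀ z ∈ s, ((Ht2 t).Adj x y ↔ ¬ ((Ht2 t).Adj z x ↔ (Ht2 t).Adj z y)) := by
  constructor
  · intro h z _; exact lemA1 h z
  · intro h
    by_contra hc
    obtain ⟨z, hz, hz1, hz2⟩ := exists_third hcard (colV x) (colV y)
    have := lemA2 hc hz1 hz2
    have := h z hz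
    tauto

lemma bool_aux1 : ∀ b1 b2 b3 b4 : Bool, ((b1 = b2) ↔ (b3 = b4)) →
    b3 = Bool.xor b1 (Bool.xor b2 b4) := by decide

lemma xorxor : ∀ b e : Bool, Bool.xor (Bool.xor b e) e = b := by decide

lemma xor_inj : ∀ b1 b2 e : Bool, (Bool.xor b1 e = Bool.xor b2 e) ↔ (b1 = b2) := by decide

lemma extend_core {α : Type*} (s t : Set α) (e : s ≃ t)
    (e' : Nonempty ((sᶜ : Set α) ≃ ((tᶜ : Set α)))) :
    ∃ σ : α ≃ α, ∀ x : s, σ x = e x := by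
  classical
  obtain ⟨e₁⟩ := e'
  obtain ⟨σ, hσ⟩ := (Equiv.Set.compl e).symm e₁
  exact ⟨σ, hσ⟩

lemma extendZ (s t : Set ℤ) (hs : s.Finite) (ht : t.Finite) (e : s ≃ t) :
    ∃ σ : ℤ ≃ ℤ, ∀ x : s, σ x = e x := by
  haveI := hs.infinite_compl.to_subtype
  haveI := ht.infinite_compl.to_subtype
  exact extend_core s t e inferInstance

lemma extendFin {m : ℕ} (s t : Set (Fin m)) (e : s ≃ t) :
    ∃ σ : Fin m ≃ Fin m, ∀ x : s, σ x = e x := by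
  classical
  refine extend_core s t e ⟨Fintype.equivOfCardEq ?_⟩
  rw [Fintype.card_compl_set, Fintype.card_compl_set, Fintype.card_congr e]

end Stmt16Aux

open Stmt16Aux Set in
theorem stmt16 (t : ℕ) (ht : 2 ≤ t) :
    GeqHom (Ht2 t) (4 * t + 1) := by
  classical
  intro n hn s₁ s₂ h1fin h2fin hc1 hc2 f
  have hc1' : 4 * t + 1 ≤ s₁.ncard := by omega
  have hc2' : 4 * t + 1 ≤ s₂.ncard := by omega
  -- adjacency transfer
  have hAdj : ∀ u v : s₁, (Ht2 t).Adj (f u).val (f v).val ↔ (Ht2 t).Adj u.val v.val :=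
    fun u v => f.map_rel_iff
  -- column preservation
  have col_pres : ∀ u v : s₁, colV u.val = colV v.val ↔ colV (f u).val = colV (f v).val := by
    intro u v
    rw [char_col (s := s₁) hc1', char_col (s := s₂) hc2']
    constructor
    · intro h z' hz'
      have hz : (f (f.symm ⟨z', hz'⟩)).val = z' := by rw [f.apply_symm_apply]
      have h3 := h (f.symm ⟨z', hz'⟩).val (f.symm ⟨z', hz'⟩).2
      rw [← hz]
      rw [hAdj u v, hAdj (f.symm ⟨z', hz'⟩) u, hAdj (f.symm ⟨z', hz'⟩) v]
      exact h3
    · intro h z hz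
      have h3 := h (f ⟨z, hz⟩).val (f ⟨z, hz⟩).2
      rw [hAdj u v, hAdj ⟨z, hz⟩ u, hAdj ⟨z, hz⟩ v] at h3
      exact h3
  -- side preservation
  have side_pres : ∀ u v : s₁,
      (sideV u.val = sideV v.val) ↔ (sideV (f u).val = sideV (f v).val) := by
    intro u v
    have hA := hAdj u v
    have hC := col_pres u v
    have e1 := adj_iff u.val v.val
    have e2 := adj_iff (f u).val (f v).val
    tauto
  -- base point
  have hne : s₁.Nonempty := Set.nonempty_of_ncard_ne_zero (by omega)
  obtain ⟨x0, hx0⟩ := hne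
  set ε : Bool := Bool.xor (sideV x0) (sideV (f ⟨x0, hx0⟩).val) with hε
  have side_eq : ∀ u : s₁, sideV (f u).val = Bool.xor (sideV u.val) ε :=
    fun u => bool_aux1 _ _ _ _ (side_pres u ⟨x0, hx0⟩)
  -- the column bijection
  have hAmem : ∀ a : ↥(colV '' s₁), ∃ x : s₁, colV x.val = a.val := by
    intro a
    obtain ⟨x, hx, he⟩ := a.2
    exact ⟨⟨x, hx⟩, he⟩
  choose rep hrep using hAmem
  have himg : ∀ a : ↥(colV '' s₁), colV (f (rep a)).val ∈ colV '' s₂ :=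
    fun a => mem_image_of_mem _ (f (rep a)).2
  have ecol_spec : ∀ u : s₁,
      colV (f (rep ⟨colV u.val, mem_image_of_mem _ u.2⟩)).val = colV (f u).val := by
    intro u
    exact (col_pres (rep _) u).mp (hrep ⟨colV u.val, mem_image_of_mem _ u.2⟩)
  have hinj : Function.Injective (fun a : ↥(colV '' s₁) =>
      (⟨colV (f (rep a)).val, himg a⟩ : ↥(colV '' s₂))) := by
    intro a b hab
    have hval : colV (f (rep a)).val = colV (f (rep b)).val := congrArg Subtype.val hab
    have := (col_pres (rep a) (rep b)).mpr hval
    apply Subtype.ext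
    rw [← hrep a, ← hrep b]
    exact this
  have hsurj : Function.Surjective (fun a : ↥(colV '' s₁) =>
      (⟨colV (f (rep a)).val, himg a⟩ : ↥(colV '' s₂))) := by
    intro a'
    obtain ⟨y, hy, hye⟩ := a'.2
    refine ⟨⟨colV (f.symm ⟨y, hy⟩).val, mem_image_of_mem _ (f.symm ⟨y, hy⟩).2⟩, ?_⟩
    apply Subtype.ext
    have := ecol_spec (f.symm ⟨y, hy⟩)
    simp only at this ⊢
    rw [this, f.apply_symm_apply]
    exact hye
  obtain ⟨σ, hσ⟩ := extendZ _ _ (h1fin.image _) (h2fin.image _)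
    (Equiv.ofBijective _ ⟨hinj, hsurj⟩)
  have σ_spec : ∀ u : s₁, σ (colV u.val) = colV (f u).val := by
    intro u
    have h := hσ ⟨colV u.val, mem_image_of_mem _ u.2⟩
    rw [h]
    exact ecol_spec u
  -- the index permutations
  have idx_ex : ∀ (b : Bool) (a : ℤ), ∃ π : Fin t ≃ Fin t,
      ∀ (i : Fin t) (hi : mkV b a i ∈ s₁), π i = idxV (f ⟨mkV b a i, hi⟩).val := by
    intro b a
    set I : Set (Fin t) := {i | mkV b a i ∈ s₁} with hI
    set I' : Set (Fin t) := {i | mkV (Bool.xor b ε) (σ a) i ∈ s₂} with hI'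
    have hside : ∀ i : ↥I, sideV (f ⟨mkV b a i.val, i.2⟩).val = Bool.xor b ε := by
      intro i
      rw [side_eq]
      simp
    have hcol : ∀ i : ↥I, colV (f ⟨mkV b a i.val, i.2⟩).val = σ a := by
      intro i
      rw [← σ_spec]
      simp
    have hmem' : ∀ i : ↥I, idxV (f ⟨mkV b a i.val, i.2⟩).val ∈ I' := by
      intro i
      show mkV (Bool.xor b ε) (σ a) _ ∈ s₂
      rw [← hside i, ← hcol i, mk_eta]
      exact (f _).2
    have hinjφ : Function.Injective (fun i : ↥I =>
        (⟨idxV (f ⟨mkV b a i.val, i.2⟩).val, hmem' i⟩ : ↥I')) := by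
      intro i1 i2 h12
      have hval : idxV (f ⟨mkV b a i1.val, i1.2⟩).val
          = idxV (f ⟨mkV b a i2.val, i2.2⟩).val := congrArg Subtype.val h12
      have e1 : (f ⟨mkV b a i1.val, i1.2⟩).val = (f ⟨mkV b a i2.val, i2.2⟩).val := by
        rw [← mk_eta (f ⟨mkV b a i1.val, i1.2⟩).val, ← mk_eta (f ⟨mkV b a i2.val, i2.2⟩).val,
          hside i1, hside i2, hcol i1, hcol i2, hval]
      have e2 : (⟨mkV b a i1.val, i1.2⟩ : s₁) = ⟨mkV b a i2.val, i2.2⟩ :=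
        f.injective (Subtype.ext e1)
      have e3 : mkV b a i1.val = mkV b a i2.val := congrArg Subtype.val e2
      apply Subtype.ext
      have := congrArg idxV e3
      simpa using this
    have hsurjφ : Function.Surjective (fun i : ↥I =>
        (⟨idxV (f ⟨mkV b a i.val, i.2⟩).val, hmem' i⟩ : ↥I')) := by
      intro j
      have hy : mkV (Bool.xor b ε) (σ a) j.val ∈ s₂ := j.2
      set u : ↥s₁ := f.symm ⟨mkV (Bool.xor b ε) (σ a) j.val, hy⟩ with hu
      have hfu : f u = ⟨mkV (Bool.xor b ε) (σ a) j.val, hy⟩ := f.apply_symm_apply _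
      have h1 := side_eq u
      rw [hfu] at h1
      simp only [side_mk] at h1
      have hsu : sideV u.val = b := (xor_inj _ _ ε).mp h1.symm
      have h2 := σ_spec u
      rw [hfu] at h2
      simp only [col_mk] at h2
      have hcu : colV u.val = a := σ.injective h2
      have humem : mkV b a (idxV u.val) = u.val := by rw [← hsu, ← hcu, mk_eta]
      have hiu : idxV u.val ∈ I := by
        show mkV b a (idxV u.val) ∈ s₁
        rw [humem]; exact u.2
      refine ⟨⟨idxV u.val, hiu⟩, ?_⟩
      apply Subtype.ext
      show idxV (f ⟨mkV b a (idxV u.val), hiu⟩).val = j.val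
      have he : (⟨mkV b a (idxV u.val), hiu⟩ : s₁) = u := Subtype.ext humem
      rw [he, hfu]
      simp
    obtain ⟨π, hπI⟩ := extendFin I I' (Equiv.ofBijective _ ⟨hinjφ, hsurjφ⟩)
    refine ⟨π, fun i hi => ?_⟩
    exact hπI ⟨i, hi⟩
  choose π hπ using idx_ex
  -- assemble the automorphism
  have xor2 : ∀ v : VV t, Bool.xor (Bool.xor (sideV v) ε) ε = sideV v := fun v => xorxor _ _
  refine ⟨⟨⟨fun v => mkV (Bool.xor (sideV v) ε) (σ (colV v)) (π (sideV v) (colV v) (idxV v)),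
      fun w => mkV (Bool.xor (sideV w) ε) (σ.symm (colV w))
        ((π (Bool.xor (sideV w) ε) (σ.symm (colV w))).symm (idxV w)),
      ?_, ?_⟩, ?_⟩, ?_⟩
  · intro v
    simp only [side_mk, col_mk, idx_mk]
    rw [xorxor, σ.symm_apply_apply, Equiv.symm_apply_apply, mk_eta]
  · intro w
    simp only [side_mk, col_mk, idx_mk]
    rw [xorxor, σ.apply_symm_apply, Equiv.apply_symm_apply, mk_eta]
  · intro v w
    simp only [Equiv.coe_fn_mk]
    rw [adj_iff, adj_iff]
    simp only [side_mk, col_mk]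
    rw [xor_inj]
    simp only [ne_eq, EmbeddingLike.apply_eq_iff_eq]
  · intro x
    show mkV (Bool.xor (sideV x.val) ε) (σ (colV x.val))
        (π (sideV x.val) (colV x.val) (idxV x.val)) = (f x).val
    have hmem : mkV (sideV x.val) (colV x.val) (idxV x.val) ∈ s₁ := by
      rw [mk_eta]; exact x.2
    have hp := hπ (sideV x.val) (colV x.val) (idxV x.val) hmem
    have hxx : (⟨mkV (sideV x.val) (colV x.val) (idxV x.val), hmem⟩ : s₁) = x :=
      Subtype.ext (mk_eta x.val)
    rw [hxx] at hp
    rw [hp, σ_spec x, ← side_eq x, mk_eta]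
end

section
/- Let M be an infinite graph that is ≥k-homogeneous, 1-homogeneous and 2-homogeneous, with K_∞ ⊆ M. Suppose n is minimal such that M is not n-homogeneous, and let A, B be induced subgraphs of size n that are isomorphic via f but lie in different orbits of Aut(M). Fix a ∈ A, let G = A − {a}, and let b be such that G ∪ {b} lies in the same orbit as B (with b corresponding to f(a)). Then a is not adjacent to b. -/
open SimpleGraph

lemma pair_orbit {V : Type} (M : SimpleGraph V) (h2 : IsNHom M 2)
    {x y c d : V} (hxy : M.Adj x y) (hcd : M.Adj c d) :
    ∃ g : M ≃g M, g x = c ∧ g y = d := by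
  classical
  have hxy' : x ≠ y := hxy.ne
  have hcd' : c ≠ d := hcd.ne
  obtain ⟨g, hg⟩ := h2 {x, y} {c, d} (Set.toFinite _) (Set.toFinite _)
    (Set.ncard_pair hxy') (Set.ncard_pair hcd')
    ⟨⟨fun v => if v.1 = x then ⟨c, Or.inl rfl⟩ else ⟨d, Or.inr rfl⟩,
      fun v => if v.1 = c then ⟨x, Or.inl rfl⟩ else ⟨y, Or.inr rfl⟩,
      by rintro ⟨v, hv | hv⟩ <;> subst hv <;>
        simp [hxy', hxy'.symm, hcd', hcd'.symm],
      by rintro ⟨v, hv | hv⟩ <;> subst hv <;>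
        simp [hxy', hxy'.symm, hcd', hcd'.symm]⟩,
      by rintro ⟨u, hu | hu⟩ ⟨v, hv | hv⟩ <;> subst hu <;> subst hv <;>
        simp [comap_adj, hxy', hxy'.symm, hcd', hcd'.symm, hxy, hxy.symm, hcd, hcd.symm]⟩
  refine ⟨g, ?_, ?_⟩
  · simpa using hg ⟨x, Or.inl rfl⟩
  · simpa [hxy'.symm] using hg ⟨y, Or.inr rfl⟩

theorem stmt18 {V : Type} [Infinite V] (M : SimpleGraph V) (k : ℕ)
    (hM : GeqHom M k) (h1 : IsNHom M 1) (h2 : IsNHom M 2) (hK : HasKInf M)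
    (n : ℕ) (hn : ¬ IsNHom M n) (hmin : ∀ m < n, IsNHom M m)
    (A B : Set V) (hA : A.Finite) (hB : B.Finite)
    (hAn : A.ncard = n) (hBn : B.ncard = n)
    (f : M.induce A ≃g M.induce B)
    (hdiff : ¬ ∃ g : M ≃g M, ∀ x : A, g x.val = (f x).val)
    (a : V) (ha : a ∈ A) (b : V)
    (hb : ∃ g : M ≃g M, (∀ x : A, x.val ≠ a → g x.val = (f x).val) ∧
      g b = (f ⟨a, ha⟩).val) :
    ¬ M.Adj a b := by
  classical
  intro hab
  obtain ⟨g, hg1, hg2⟩ := hb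
  have hne : a ≠ b := hab.ne
  have hbA : b ∉ A := by
    intro hbA'
    have h1' : g b = (f ⟨b, hbA'⟩).val := hg1 ⟨b, hbA'⟩ hne.symm
    rw [hg2] at h1'
    have : (⟨a, ha⟩ : A) = ⟨b, hbA'⟩ := f.injective (Subtype.val_injective h1')
    exact hne (congrArg Subtype.val this)
  -- b has same adjacency to A \ {a} as a
  have key1 : ∀ x ∈ A, x ≠ a → (M.Adj b x ↔ M.Adj a x) := by
    intro x hx hxa
    have e1 : M.Adj b x ↔ M.Adj (g b) (g x) := g.map_adj_iff.symm
    rw [hg2, hg1 ⟨x, hx⟩ hxa] at e1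
    have e2 : M.Adj ((f ⟨a, ha⟩ : B) : V) ((f ⟨x, hx⟩ : B) : V) ↔ M.Adj a x := by
      have e3 : (M.induce B).Adj (f ⟨a, ha⟩) (f ⟨x, hx⟩) ↔
          (M.induce A).Adj ⟨a, ha⟩ ⟨x, hx⟩ := f.map_adj_iff
      simpa [comap_adj] using e3
    exact e1.trans e2
  -- a common infinite clique through a and b
  obtain ⟨e₀⟩ := hK
  have hadj01 : M.Adj (e₀ 0) (e₀ 1) := e₀.map_rel_iff.mpr (by simp)
  obtain ⟨h, hh1, hh2⟩ := pair_orbit M h2 hadj01 hab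
  set N : Set V := h '' Set.range e₀ with hN
  have haN : a ∈ N := ⟨e₀ 0, ⟨0, rfl⟩, hh1⟩
  have hbN : b ∈ N := ⟨e₀ 1, ⟨1, rfl⟩, hh2⟩
  have hclique : ∀ x ∈ N, ∀ y ∈ N, x ≠ y → M.Adj x y := by
    rintro x ⟨u, ⟨i, rfl⟩, rfl⟩ y ⟨v, ⟨j, rfl⟩, rfl⟩ hxy
    have hij : i ≠ j := by rintro rfl; exact hxy rfl
    exact h.map_adj_iff.mpr (e₀.map_rel_iff.mpr hij)
  have hNinf : N.Infinite :=
    (Set.infinite_range_of_injective e₀.injective).image h.injective.injOn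
  -- choose k extra clique vertices
  obtain ⟨C, hCsub, hCfin, hCcard⟩ :=
    (hNinf.diff (hA.insert b)).exists_subset_ncard_eq k
  set T : Set V := insert b A ∪ C with hT
  have hTfin : T.Finite := ((hA.insert b).union hCfin)
  have haT : a ∈ T := Or.inl (Or.inr ha)
  have hbT : b ∈ T := Or.inl (Or.inl rfl)
  have hkT : k ≤ T.ncard := by
    rw [← hCcard]
    exact Set.ncard_le_ncard Set.subset_union_right hTfin
  have key : ∀ x ∈ T, x ≠ a → x ≠ b → (M.Adj a x ↔ M.Adj b x) := by
    rintro x (hx | hx) hxa hxb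
    · rcases hx with rfl | hx
      · exact absurd rfl hxb
      · exact (key1 x hx hxa).symm
    · have hx' := hCsub hx
      have hxN : x ∈ N := hx'.1
      constructor
      · intro _; exact hclique b hbN x hxN (Ne.symm hxb)
      · intro _; exact hclique a haN x hxN (Ne.symm hxa)
  -- the swap of a and b on T is an isomorphism of the induced graph
  set a' : T := ⟨a, haT⟩
  set b' : T := ⟨b, hbT⟩
  have hab' : a' ≠ b' := fun hh => hne (congrArg Subtype.val hh)
  have σmap : ∀ u v : T,
      M.Adj ((Equiv.swap a' b' u : T) : V) ((Equiv.swap a' b' v : T) : V) ↔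
        M.Adj (u : V) (v : V) := by
    intro u v
    rcases eq_or_ne u a' with rfl | hu1
    · rw [Equiv.swap_apply_left]
      rcases eq_or_ne v a' with rfl | hv1
      · rw [Equiv.swap_apply_left]
        exact iff_of_false (M.loopless.irrefl _) (M.loopless.irrefl _)
      rcases eq_or_ne v b' with rfl | hv2
      · rw [Equiv.swap_apply_right]
        exact M.adj_comm b a
      · rw [Equiv.swap_apply_of_ne_of_ne hv1 hv2]
        exact (key v v.2 (fun hh => hv1 (Subtype.ext hh))
          (fun hh => hv2 (Subtype.ext hh))).symm
    rcases eq_or_ne u b' with rfl | hu2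
    · rw [Equiv.swap_apply_right]
      rcases eq_or_ne v a' with rfl | hv1
      · rw [Equiv.swap_apply_left]
        exact M.adj_comm a b
      rcases eq_or_ne v b' with rfl | hv2
      · rw [Equiv.swap_apply_right]
        exact iff_of_false (M.loopless.irrefl _) (M.loopless.irrefl _)
      · rw [Equiv.swap_apply_of_ne_of_ne hv1 hv2]
        exact key v v.2 (fun hh => hv1 (Subtype.ext hh))
          (fun hh => hv2 (Subtype.ext hh))
    · rw [Equiv.swap_apply_of_ne_of_ne hu1 hu2]
      have hkeyu := key u u.2 (fun hh => hu1 (Subtype.ext hh))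
        (fun hh => hu2 (Subtype.ext hh))
      rcases eq_or_ne v a' with rfl | hv1
      · rw [Equiv.swap_apply_left]
        rw [M.adj_comm (u : V) b, M.adj_comm (u : V) a]
        exact hkeyu.symm
      rcases eq_or_ne v b' with rfl | hv2
      · rw [Equiv.swap_apply_right]
        rw [M.adj_comm (u : V) a, M.adj_comm (u : V) b]
        exact hkeyu
      · rw [Equiv.swap_apply_of_ne_of_ne hv1 hv2]
  obtain ⟨h', hh'⟩ := hM T.ncard hkT T T hTfin hTfin rfl rfl
    ⟨Equiv.swap a' b', by intro u v; simpa [comap_adj] using σmap u v⟩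
  apply hdiff
  refine ⟨h'.trans g, ?_⟩
  rintro ⟨x, hx⟩
  have hxT : x ∈ T := Or.inl (Or.inr hx)
  have hstep : h' x = ((Equiv.swap a' b' ⟨x, hxT⟩ : T) : V) := hh' ⟨x, hxT⟩
  by_cases hxa : x = a
  · subst hxa
    have : (⟨x, hxT⟩ : T) = a' := rfl
    rw [this, Equiv.swap_apply_left] at hstep
    show g (h' x) = _
    rw [hstep]
    show g b = _
    rw [hg2]
  · have hxb : x ≠ b := fun hh => hbA (hh ▸ hx)
    have h1 : (⟨x, hxT⟩ : T) ≠ a' := fun hh => hxa (congrArg Subtype.val hh)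
    have h2' : (⟨x, hxT⟩ : T) ≠ b' := fun hh => hxb (congrArg Subtype.val hh)
    rw [Equiv.swap_apply_of_ne_of_ne h1 h2'] at hstep
    show g (h' x) = _
    rw [hstep]
    exact hg1 ⟨x, hx⟩ hxa
end

section
/- Let k ∈ ℕ. Every countably infinite graph M that is ≥k-homogeneous, 1-homogeneous and 2-homogeneous is homogeneous, i.e., every isomorphism between finite induced subgraphs of M extends to an automorphism of M. -/
open SimpleGraph

namespace StmtAux19

open SimpleGraph

variable {V : Type}

/-- Agreement set of `u, v`: vertices (other than them) adjacent to both or neither. -/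
def AgS (M : SimpleGraph V) (u v : V) : Set V :=
  {x | x ≠ u ∧ x ≠ v ∧ (M.Adj x u ↔ M.Adj x v)}

/-- `u, v` are distinct with adjacency value `e`. -/
def Arel (M : SimpleGraph V) (e : Prop) (u v : V) : Prop :=
  u ≠ v ∧ (M.Adj u v ↔ e)

/-- `e`-neighborhood. -/
def NAs (M : SimpleGraph V) (e : Prop) (v : V) : Set V := {x | Arel M e x v}

def nonNAs (M : SimpleGraph V) (e : Prop) (v : V) : Set V :=
  {x | x ≠ v ∧ ¬ Arel M e x v}

lemma arel_symm {M : SimpleGraph V} {e : Prop} {u v : V} (h : Arel M e u v) :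
    Arel M e v u := ⟨h.1.symm, by rw [M.adj_comm]; exact h.2⟩

lemma ags_symm {M : SimpleGraph V} {u v x : V} (h : x ∈ AgS M u v) : x ∈ AgS M v u :=
  ⟨h.2.1, h.1, h.2.2.symm⟩

def buildIso (M : SimpleGraph V) {s t : Set V} (φ : s → t) (ψ : t → s)
    (hl : ∀ a, ψ (φ a) = a) (hr : ∀ b, φ (ψ b) = b)
    (hadj : ∀ a b : s, M.Adj (φ a).val (φ b).val ↔ M.Adj a.val b.val) :
    M.induce s ≃g M.induce t :=
  { toFun := φ, invFun := ψ, left_inv := hl, right_inv := hr,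
    map_rel_iff' := fun {a b} => hadj a b }

@[simp] lemma buildIso_apply (M : SimpleGraph V) {s t : Set V} (φ : s → t) (ψ : t → s)
    (hl hr hadj) (a : s) : (buildIso M φ ψ hl hr hadj) a = φ a := rfl

lemma one_trans {M : SimpleGraph V} (h1 : IsNHom M 1) (u v : V) :
    ∃ g : M ≃g M, g u = v := by
  classical
  obtain ⟨g, hg⟩ := h1 {u} {v} (Set.finite_singleton u) (Set.finite_singleton v)
    (Set.ncard_singleton u) (Set.ncard_singleton v)
    (buildIso M (fun _ => ⟨v, rfl⟩) (fun _ => ⟨u, rfl⟩)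
      (by rintro ⟨a, ha⟩; exact Subtype.ext (by simpa using ha.symm))
      (by rintro ⟨b, hb⟩; exact Subtype.ext (by simpa using hb.symm))
      (by rintro ⟨a, ha⟩ ⟨b, hb⟩
          simp only [Set.mem_singleton_iff] at ha hb
          subst ha; subst hb; simp))
  exact ⟨g, by simpa using hg ⟨u, rfl⟩⟩

lemma two_trans {M : SimpleGraph V} (h2 : IsNHom M 2) {x y u v : V} (hxy : x ≠ y)
    (huv : u ≠ v) (hadj : M.Adj x y ↔ M.Adj u v) :
    ∃ g : M ≃g M, g x = u ∧ g y = v := by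
  classical
  obtain ⟨g, hg⟩ := h2 {x, y} {u, v} (Set.toFinite _) (Set.toFinite _)
    (Set.ncard_pair hxy) (Set.ncard_pair huv)
    (buildIso M
      (fun a => if a.val = x then ⟨u, Or.inl rfl⟩ else ⟨v, Or.inr rfl⟩)
      (fun b => if b.val = u then ⟨x, Or.inl rfl⟩ else ⟨y, Or.inr rfl⟩)
      (by rintro ⟨a, ha⟩
          rcases (show a = x ∨ a = y by simpa using ha) with rfl | rfl
          · simp
          · simp [Ne.symm hxy, Ne.symm huv])
      (by rintro ⟨b, hb⟩
          rcases (show b = u ∨ b = v by simpa using hb) with rfl | rfl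
          · simp
          · simp [Ne.symm hxy, Ne.symm huv])
      (by rintro ⟨a, ha⟩ ⟨b, hb⟩
          dsimp only
          by_cases h1a : a = x <;> by_cases h1b : b = x
          · rw [if_pos h1a, if_pos h1b]
            simp only [h1a, h1b]; simp
          · have hb' : b = y := (show b = x ∨ b = y by simpa using hb).resolve_left h1b
            rw [if_pos h1a, if_neg h1b]
            simp only [h1a, hb']
            exact hadj.symm
          · have ha' : a = y := (show a = x ∨ a = y by simpa using ha).resolve_left h1a
            rw [if_neg h1a, if_pos h1b]
            simp only [ha', h1b]
            rw [M.adj_comm v u, M.adj_comm y x]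
            exact hadj.symm
          · have ha' : a = y := (show a = x ∨ a = y by simpa using ha).resolve_left h1a
            have hb' : b = y := (show b = x ∨ b = y by simpa using hb).resolve_left h1b
            rw [if_neg h1a, if_neg h1b]
            simp only [ha', hb']; simp))
  refine ⟨g, ?_, ?_⟩
  · simpa using hg ⟨x, Or.inl rfl⟩
  · simpa [Ne.symm hxy] using hg ⟨y, Or.inr rfl⟩


section Key

variable {M : SimpleGraph V} {e : Prop}

lemma iso_arel (g : M ≃g M) {x y : V} : Arel M e (g x) (g y) ↔ Arel M e x y := by
  unfold Arel
  rw [g.map_adj_iff, g.injective.ne_iff]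

lemma image_NAs (g : M ≃g M) (v : V) : g '' NAs M e v = NAs M e (g v) := by
  ext y
  obtain ⟨x, rfl⟩ := g.surjective y
  rw [g.injective.mem_set_image]
  exact (iso_arel g).symm

lemma image_nonNAs (g : M ≃g M) (v : V) : g '' nonNAs M e v = nonNAs M e (g v) := by
  ext y
  obtain ⟨x, rfl⟩ := g.surjective y
  rw [g.injective.mem_set_image]
  simp only [nonNAs, Set.mem_setOf_eq, iso_arel g, g.injective.ne_iff]

lemma image_AgS (g : M ≃g M) (u v : V) : g '' AgS M u v = AgS M (g u) (g v) := by
  ext y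
  obtain ⟨x, rfl⟩ := g.surjective y
  rw [g.injective.mem_set_image]
  simp only [AgS, Set.mem_setOf_eq, g.map_adj_iff, g.injective.ne_iff]

variable [Infinite V]

/-- No `Arel`-triangle. -/
lemma no_tri (hFin : ∀ u v, Arel M e u v → (AgS M u v).Finite)
    {u v w : V} (huv : Arel M e u v) (huw : Arel M e u w) (hvw : Arel M e v w) :
    False := by
  have hfin : (AgS M u v ∪ AgS M u w ∪ AgS M v w ∪ {u, v, w}).Finite := by
    refine (((hFin u v huv).union (hFin u w huw)).union (hFin v w hvw)).union ?_
    exact (Set.finite_singleton w).insert v |>.insert u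
  obtain ⟨x, hx⟩ := hfin.infinite_compl.nonempty
  simp only [Set.mem_compl_iff, Set.mem_union, Set.mem_insert_iff,
    Set.mem_singleton_iff, not_or] at hx
  obtain ⟨⟨⟨h1, h2⟩, h3⟩, h4, h5, h6⟩ := hx
  simp only [AgS, Set.mem_setOf_eq, not_and] at h1 h2 h3
  have i1 := h1 h4 h5
  have i2 := h2 h4 h6
  have i3 := h3 h5 h6
  tauto

section Edge

variable (hFin : ∀ u v, Arel M e u v → (AgS M u v).Finite)
variable {c c' : V} (hcc : Arel M e c c')

omit [Infinite V] in
/-- Every vertex outside the union of neighbourhoods of `c` and `c'` agrees. -/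
lemma cover (c c' : V) : ∀ x, x ∈ NAs M e c ∨ x ∈ NAs M e c' ∨ x ∈ AgS M c c' ∨ x = c ∨ x = c' := by
  intro x
  by_cases hx1 : x ∈ NAs M e c
  · exact Or.inl hx1
  by_cases hx2 : x ∈ NAs M e c'
  · exact Or.inr (Or.inl hx2)
  by_cases hx3 : x = c
  · exact Or.inr (Or.inr (Or.inr (Or.inl hx3)))
  by_cases hx4 : x = c'
  · exact Or.inr (Or.inr (Or.inr (Or.inr hx4)))
  refine Or.inr (Or.inr (Or.inl ⟨hx3, hx4, ?_⟩))
  simp only [NAs, Arel, Set.mem_setOf_eq, not_and] at hx1 hx2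
  have := hx1 hx3
  have := hx2 hx4
  tauto

include hFin hcc in
lemma na_inf (h1 : IsNHom M 1) : ∀ v, (NAs M e v).Infinite := by
  have hone : (NAs M e c).Infinite ∨ (NAs M e c').Infinite := by
    by_contra hcon
    push_neg at hcon
    have : (Set.univ : Set V).Finite := by
      refine Set.Finite.subset (hcon.1.union (hcon.2.union ((hFin c c' hcc).union
        (((Set.finite_singleton c').insert c))))) ?_
      intro x _
      rcases cover c c' x with h | h | h | h | h
      · exact Or.inl h
      · exact Or.inr (Or.inl h)
      · exact Or.inr (Or.inr (Or.inl h))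
      · exact Or.inr (Or.inr (Or.inr (by simp [h])))
      · exact Or.inr (Or.inr (Or.inr (by simp [h])))
    exact Set.infinite_univ this
  intro v
  obtain hw | hw := hone
  · obtain ⟨g, hg⟩ := one_trans h1 c v
    have := image_NAs (e := e) g c
    rw [hg] at this
    rw [← this]
    exact hw.image g.injective.injOn
  · obtain ⟨g, hg⟩ := one_trans h1 c' v
    have := image_NAs (e := e) g c'
    rw [hg] at this
    rw [← this]
    exact hw.image g.injective.injOn

include hFin hcc in
lemma nonna_inf (h1 : IsNHom M 1) : ∀ v, (nonNAs M e v).Infinite := by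
  have hc : (nonNAs M e c).Infinite := by
    refine Set.Infinite.mono ?_ ((na_inf hFin hcc h1 c').diff (Set.finite_singleton c))
    rintro y ⟨hy, hyc⟩
    refine ⟨hyc, fun hyc' => no_tri hFin hyc' hy hcc⟩
  intro v
  obtain ⟨g, hg⟩ := one_trans h1 c v
  have := image_nonNAs (e := e) g c
  rw [hg] at this
  rw [← this]
  exact hc.image g.injective.injOn

include hFin in
lemma dagger {v w : V} (hint : (NAs M e v ∩ NAs M e w).Infinite) :
    (NAs M e w \ NAs M e v).Finite := by
  obtain ⟨x, hxv, hxw⟩ := hint.nonempty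
  refine Set.Finite.subset ((hFin v x (arel_symm hxv)).union
    ((Set.finite_singleton x).insert v)) ?_
  rintro y ⟨hyw, hyv⟩
  by_cases hy1 : y = v
  · exact Or.inr (by simp [hy1])
  by_cases hy2 : y = x
  · exact Or.inr (by simp [hy2])
  refine Or.inl ⟨hy1, hy2, ?_⟩
  have hnyx : ¬ Arel M e y x := fun h => no_tri hFin h hyw hxw
  simp only [NAs, Set.mem_setOf_eq] at hyv
  simp only [Arel, not_and] at hyv hnyx
  have := hyv hy1
  have := hnyx hy2
  tauto

include hFin hcc in
lemma notboth (h1 : IsNHom M 1) (v : V) (hL : (NAs M e v ∩ NAs M e c).Infinite)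
    (hR : (NAs M e v ∩ NAs M e c').Infinite) : False := by
  have f1 : (NAs M e c \ NAs M e v).Finite := dagger hFin hL
  have f2 : (NAs M e c' \ NAs M e v).Finite := dagger hFin hR
  have : (nonNAs M e v).Finite := by
    refine Set.Finite.subset ((f1.union f2).union ((hFin c c' hcc).union
      ((Set.finite_singleton c').insert c))) ?_
    rintro x ⟨hxv, hnx⟩
    have hxnotin : x ∉ NAs M e v := hnx
    rcases cover c c' x with h | h | h | h | h
    · exact Or.inl (Or.inl ⟨h, hxnotin⟩)
    · exact Or.inl (Or.inr ⟨h, hxnotin⟩)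
    · exact Or.inr (Or.inl h)
    · exact Or.inr (Or.inr (by simp [h]))
    · exact Or.inr (Or.inr (by simp [h]))
  exact nonna_inf hFin hcc h1 v this

include hFin hcc in
lemma dich (h1 : IsNHom M 1) (v : V) :
    (NAs M e v ∩ NAs M e c).Infinite ∨ (NAs M e v ∩ NAs M e c').Infinite := by
  by_contra hcon
  push_neg at hcon
  have : (NAs M e v).Finite := by
    refine Set.Finite.subset ((hcon.1.union hcon.2).union ((hFin c c' hcc).union
      ((Set.finite_singleton c').insert c))) ?_
    intro x hx
    rcases cover c c' x with h | h | h | h | h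
    · exact Or.inl (Or.inl ⟨hx, h⟩)
    · exact Or.inl (Or.inr ⟨hx, h⟩)
    · exact Or.inr (Or.inl h)
    · exact Or.inr (Or.inr (by simp [h]))
    · exact Or.inr (Or.inr (by simp [h]))
  exact na_inf hFin hcc h1 v this

include hFin in
lemma indep {u v w : V} (hu : (NAs M e u ∩ NAs M e w).Infinite)
    (hv : (NAs M e v ∩ NAs M e w).Infinite) (huv : Arel M e u v) : False := by
  have f1 : (NAs M e w \ NAs M e u).Finite := dagger hFin hu
  have f2 : (NAs M e w \ NAs M e v).Finite := dagger hFin hv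
  have hinf : ((NAs M e w \ (NAs M e w \ NAs M e u)) \ (NAs M e w \ NAs M e v)).Infinite :=
    ((hu.mono Set.inter_subset_right).diff f1).diff f2
  obtain ⟨x, hx⟩ := hinf.nonempty
  obtain ⟨⟨hxw, hx1⟩, hx2⟩ := hx
  have hxu : x ∈ NAs M e u := by
    by_contra h; exact hx1 ⟨hxw, h⟩
  have hxv : x ∈ NAs M e v := by
    by_contra h; exact hx2 ⟨hxw, h⟩
  exact no_tri hFin huv (arel_symm hxu) (arel_symm hxv)

include hFin hcc in
lemma nac'_L (h1 : IsNHom M 1) {x : V} (hx : x ∈ NAs M e c') :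
    (NAs M e x ∩ NAs M e c).Infinite := by
  rcases dich hFin hcc h1 x with h | h
  · exact h
  · exfalso
    obtain ⟨y, hyx, hyc'⟩ := h.nonempty
    exact no_tri hFin hyx hyc' hx

include hFin hcc in
lemma keyhalf (h1 : IsNHom M 1) (h2 : IsNHom M 2) {a : V} (ha : a ∈ AgS M c c')
    (hL : (NAs M e a ∩ NAs M e c).Infinite) : False := by
  obtain ⟨hac, hac', hiff⟩ := ha
  have hNAc : (NAs M e c).Infinite := na_inf hFin hcc h1 c
  have hnac : ¬ Arel M e a c := by
    intro h
    exact indep hFin hL (by rw [Set.inter_self]; exact hNAc) h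
  have hfin2 : (NAs M e a ∩ NAs M e c').Finite := by
    rw [← Set.not_infinite]
    exact fun h => notboth hFin hcc h1 a hL h
  have hinf' := na_inf hFin hcc h1 c'
  obtain ⟨u, hu⟩ := hinf'.nonempty
  obtain ⟨v, hv, hvu⟩ := (hinf'.diff (Set.finite_singleton u)).nonempty
  have hvu' : v ≠ u := by simpa using hvu
  have hnuv : ¬ Arel M e u v := fun h =>
    indep hFin (nac'_L hFin hcc h1 hu) (nac'_L hFin hcc h1 hv) h
  -- adjacency values agree
  have hadj : M.Adj a c' ↔ M.Adj u v := by
    simp only [Arel, not_and] at hnac hnuv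
    have i1 := hnac hac
    have i2 := hnuv hvu'.symm
    have i3 := hcc.2
    tauto
  obtain ⟨g, hga, hgc'⟩ := two_trans h2 hac' hvu'.symm hadj
  have himg : g '' (NAs M e a ∩ NAs M e c') = NAs M e u ∩ NAs M e v := by
    rw [Set.image_inter g.injective, image_NAs, image_NAs, hga, hgc']
  have hbig : (NAs M e u ∩ NAs M e v).Infinite := by
    refine Set.Infinite.mono ?_
      (((hNAc.diff (dagger hFin (nac'_L hFin hcc h1 hu))).diff
        (dagger hFin (nac'_L hFin hcc h1 hv))))
    rintro x ⟨⟨hxc, hx1⟩, hx2⟩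
    constructor
    · by_contra h; exact hx1 ⟨hxc, h⟩
    · by_contra h; exact hx2 ⟨hxc, h⟩
  rw [← himg] at hbig
  exact hbig (hfin2.image g)

include hFin hcc in
lemma key (h1 : IsNHom M 1) (h2 : IsNHom M 2) {a : V} (ha : a ∈ AgS M c c') : False := by
  rcases dich hFin hcc h1 a with h | h
  · exact keyhalf hFin hcc h1 h2 ha h
  · exact keyhalf hFin (arel_symm hcc) h1 h2 (ags_symm ha) h

end Edge

end Key

section Main

variable {M : SimpleGraph V} [Infinite V]

lemma tall (k : ℕ) (hM : GeqHom M k) (h1 : IsNHom M 1) (h2 : IsNHom M 2)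
    (F : Finset V) (c c' : V) (hcF : c ∉ F) (hc'F : c' ∉ F) (hne : c ≠ c')
    (hag : ∀ v ∈ F, M.Adj v c ↔ M.Adj v c') :
    ∃ g : M ≃g M, (∀ v ∈ F, g v = v) ∧ g c = c' := by
  classical
  by_cases hinf : (AgS M c c').Infinite
  case pos =>
    set N := max k (F.card + 1) with hN
    obtain ⟨E, hEsub, hEcard⟩ :=
      (hinf.diff F.finite_toSet).exists_subset_card_eq (N - 1 - F.card)
    set F' : Finset V := F ∪ E with hF'
    have hF'sub : ∀ v ∈ F', v ∈ AgS M c c' := by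
      intro v hv
      rcases Finset.mem_union.mp hv with h | h
      · exact ⟨fun hh => hcF (hh ▸ h), fun hh => hc'F (hh ▸ h), hag v h⟩
      · exact (hEsub h).1
    have hcF' : c ∉ F' := fun h => (hF'sub c h).1 rfl
    have hc'F' : c' ∉ F' := fun h => (hF'sub c' h).2.1 rfl
    have hdisj : Disjoint F E :=
      Finset.disjoint_left.mpr fun a haF haE => (hEsub haE).2 (Finset.mem_coe.mpr haF)
    have hcard : F'.card = N - 1 := by
      rw [hF', Finset.card_union_of_disjoint hdisj, hEcard]
      have : F.card + 1 ≤ N := le_max_right _ _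
      omega
    have hN1 : 1 ≤ N := le_trans (Nat.le_add_left 1 F.card) (le_max_right _ _)
    have hsfin : (insert c (↑F' : Set V)).Finite := F'.finite_toSet.insert c
    have htfin : (insert c' (↑F' : Set V)).Finite := F'.finite_toSet.insert c'
    have ncs : (insert c (↑F' : Set V)).ncard = N := by
      rw [Set.ncard_insert_of_notMem (by simpa using hcF') F'.finite_toSet,
        Set.ncard_coe_finset, hcard]
      omega
    have nct : (insert c' (↑F' : Set V)).ncard = N := by
      rw [Set.ncard_insert_of_notMem (by simpa using hc'F') F'.finite_toSet,
        Set.ncard_coe_finset, hcard]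
      omega
    obtain ⟨g, hg⟩ := hM N (le_max_left _ _) (insert c ↑F') (insert c' ↑F') hsfin htfin ncs nct
      (buildIso M
        (fun a => if h : a.val = c then ⟨c', Set.mem_insert _ _⟩
          else ⟨a.val, Set.mem_insert_iff.mpr (Or.inr ((Set.mem_insert_iff.mp a.2).resolve_left h))⟩)
        (fun b => if h : b.val = c' then ⟨c, Set.mem_insert _ _⟩
          else ⟨b.val, Set.mem_insert_iff.mpr (Or.inr ((Set.mem_insert_iff.mp b.2).resolve_left h))⟩)
        (by intro a
            by_cases h : a.val = c
            · rw [dif_pos h, dif_pos rfl]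
              exact Subtype.ext h.symm
            · rw [dif_neg h]
              have h2 : a.val ≠ c' := by
                intro hh
                exact hc'F' (by
                  have := (Set.mem_insert_iff.mp a.2).resolve_left h
                  rwa [hh] at this)
              rw [dif_neg h2])
        (by intro b
            by_cases h : b.val = c'
            · rw [dif_pos h, dif_pos rfl]
              exact Subtype.ext h.symm
            · rw [dif_neg h]
              have h2 : b.val ≠ c := by
                intro hh
                exact hcF' (by
                  have := (Set.mem_insert_iff.mp b.2).resolve_left h
                  rwa [hh] at this)
              rw [dif_neg h2])
        (by intro a b
            by_cases ha : a.val = c <;> by_cases hb : b.val = c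
            · rw [dif_pos ha, dif_pos hb]
              rw [ha, hb]
              simp
            · rw [dif_pos ha, dif_neg hb]
              rw [ha]
              have hbF' : b.val ∈ F' := Finset.mem_coe.mp ((Set.mem_insert_iff.mp b.2).resolve_left hb)
              rw [M.adj_comm c' _, M.adj_comm c _]
              exact (hF'sub _ hbF').2.2.symm
            · rw [dif_neg ha, dif_pos hb]
              rw [hb]
              have haF' : a.val ∈ F' := Finset.mem_coe.mp ((Set.mem_insert_iff.mp a.2).resolve_left ha)
              exact (hF'sub _ haF').2.2.symm
            · rw [dif_neg ha, dif_neg hb]))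
    refine ⟨g, ?_, ?_⟩
    · intro v hv
      have hvF' : v ∈ F' := Finset.mem_union_left _ hv
      have hvc : v ≠ c := fun hh => hcF' (hh ▸ hvF')
      have := hg ⟨v, Set.mem_insert_iff.mpr (Or.inr (Finset.mem_coe.mpr hvF'))⟩
      simpa [buildIso_apply, dif_neg hvc] using this
    · have := hg ⟨c, Set.mem_insert _ _⟩
      simpa [buildIso_apply] using this
  case neg =>
    rcases Finset.eq_empty_or_nonempty F with rfl | ⟨a, haF⟩
    · obtain ⟨g, hg⟩ := one_trans h1 c c'
      exact ⟨g, by simp, hg⟩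
    · exfalso
      have hfin := Set.not_infinite.mp hinf
      have hFinAll : ∀ u v, Arel M (M.Adj c c') u v → (AgS M u v).Finite := by
        rintro u v ⟨huv, hadj⟩
        obtain ⟨g, hgc, hgc'⟩ := two_trans h2 hne huv hadj.symm
        have himg := image_AgS (M := M) g c c'
        rw [hgc, hgc'] at himg
        rw [← himg]
        exact hfin.image g
      exact key hFinAll ⟨hne, Iff.rfl⟩ h1 h2
        (a := a) ⟨fun hh => hcF (hh ▸ haF), fun hh => hc'F (hh ▸ haF), hag a haF⟩

lemma chain (k : ℕ) (hM : GeqHom M k) (h1 : IsNHom M 1) (h2 : IsNHom M 2)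
    (s : Finset V) :
    ∀ (φ : V → V), Set.InjOn φ ↑s →
      (∀ u ∈ s, ∀ v ∈ s, M.Adj (φ u) (φ v) ↔ M.Adj u v) →
      ∃ g : M ≃g M, ∀ v ∈ s, g v = φ v := by
  classical
  induction s using Finset.induction_on with
  | empty => exact fun φ _ _ => ⟨RelIso.refl _, by simp⟩
  | @insert a s ha IH =>
    intro φ hinj hadj
    obtain ⟨g, hg⟩ := IH φ
      (hinj.mono (by rw [Finset.coe_insert]; exact Set.subset_insert _ _))
      (fun u hu v hv => hadj u (Finset.mem_insert_of_mem hu) v (Finset.mem_insert_of_mem hv))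
    by_cases heq : g a = φ a
    · refine ⟨g, fun v hv => ?_⟩
      rcases Finset.mem_insert.mp hv with rfl | hv
      · exact heq
      · exact hg v hv
    · set F : Finset V := s.image φ with hF
      have hcF : g a ∉ F := by
        intro h
        obtain ⟨w, hw, hww⟩ := Finset.mem_image.mp h
        rw [← hg w hw] at hww
        exact ha ((g.injective hww : w = a) ▸ hw)
      have hc'F : φ a ∉ F := by
        intro h
        obtain ⟨w, hw, hww⟩ := Finset.mem_image.mp h
        have : w = a := hinj (by simp [hw]) (by simp) hww
        exact ha (this ▸ hw)
      have hag : ∀ v ∈ F, M.Adj v (g a) ↔ M.Adj v (φ a) := by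
        intro v hv
        obtain ⟨w, hw, rfl⟩ := Finset.mem_image.mp hv
        have h1' : M.Adj (φ w) (g a) ↔ M.Adj w a := by
          rw [← hg w hw]; exact g.map_adj_iff
        rw [h1']
        exact (hadj w (Finset.mem_insert_of_mem hw) a (Finset.mem_insert_self _ _)).symm
      obtain ⟨h, hhF, hhc⟩ := tall k hM h1 h2 F (g a) (φ a) hcF hc'F heq hag
      refine ⟨g.trans h, fun v hv => ?_⟩
      rcases Finset.mem_insert.mp hv with rfl | hv
      · exact hhc
      · rw [show (g.trans h) v = h (g v) from rfl, hg v hv]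
        exact hhF (φ v) (Finset.mem_image_of_mem φ hv)

end Main

end StmtAux19

theorem stmt19 {V : Type} [Countable V] [Infinite V] (M : SimpleGraph V) (k : ℕ)
    (hM : GeqHom M k) (h1 : IsNHom M 1) (h2 : IsNHom M 2) :
    IsHomogeneous M := by
  classical
  intro n s t hs ht hcs hct f
  set φ : V → V := fun x => if h : x ∈ s then (f ⟨x, h⟩).val else x with hφ
  have hinj : Set.InjOn φ ↑hs.toFinset := by
    intro u hu v hv huv
    simp only [Set.Finite.coe_toFinset] at hu hv
    simp only [hφ, dif_pos hu, dif_pos hv] at huv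
    have := f.injective (Subtype.ext huv)
    exact congrArg Subtype.val this
  have hadj : ∀ u ∈ hs.toFinset, ∀ v ∈ hs.toFinset, M.Adj (φ u) (φ v) ↔ M.Adj u v := by
    intro u hu v hv
    rw [Set.Finite.mem_toFinset] at hu hv
    simp only [hφ, dif_pos hu, dif_pos hv]
    exact f.map_adj_iff
  obtain ⟨g, hg⟩ := StmtAux19.chain k hM h1 h2 hs.toFinset φ hinj hadj
  refine ⟨g, ?_⟩
  rintro ⟨x, hx⟩
  have := hg x (hs.mem_toFinset.mpr hx)
  simpa [hφ, dif_pos hx] using this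
end
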